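/- Let Q = diag(q_1,…,q_n) with q_i > 0, let B ∈ ℝ^{n×m} with Bᵀ𝟙 = 0, let L_c ∈ ℝ^{n×n} with L_c𝟙 = 0, let γ_c, γ_e, γ_p, γ_l > 0, d, r, x̄_0, x̄_s ∈ ℝ^n and x̄(t) := x̄_0 + x̄_s t. Suppose x, x_p : [0,∞) → ℝ^n and x_e : [0,∞) → ℝ^m are differentiable and satisfy for all t ≥ 0: ẋ = −γ_c B Bᵀ(x − x̄(t)) − γ_e B x_e + Q^{-1}(γ_p x_p − r) + d, ẋ_p = −γ_l L_c x_p − γ_p Q^{-1}(x − x̄(t)), ẋ_e = γ_e Bᵀ(x − x̄(t)). Let x̄_p := −(1/γ_p)(𝟙𝟙ᵀ/(𝟙ᵀQ^{-1}𝟙)) d̃ with d̃ := d − x̄_s − Q^{-1}r, and let x̄_e ∈ ℝ^m be any vector with γ_e B x̄_e = (I − Q^{-1}𝟙𝟙ᵀ/(𝟙ᵀQ^{-1}𝟙)) d̃. Then the incremental states x̃ := x − x̄, x̃_p := x_p − x̄_p, x̃_e := x_e − x̄_e satisfy for all t ≥ 0: x̃' = −γ_c B Bᵀ x̃ − γ_e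 B x̃_e + γ_p Q^{-1} x̃_p, x̃_p' = −γ_l L_c x̃_p − γ_p Q^{-1} x̃, x̃_e' = γ_e Bᵀ x̃. -/

import Mathlib

open Matrix Filter

/-- Euclidean norm on `Fin k → ℝ`. -/
noncomputable def euclNorm {k : ℕ} (v : Fin k → ℝ) : ℝ :=
  ‖(WithLp.equiv 2 (Fin k → ℝ)).symm v‖

/-- Operator norm on matrices induced by the Euclidean norms. -/
noncomputable def matOpNorm {k l : ℕ} (A : Matrix (Fin k) (Fin l) ℝ) : ℝ :=
  ‖LinearMap.toContinuousLinearMap (Matrix.toEuclideanLin A)‖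

/-- The all-ones vector `𝟙`. -/
def onesVec (k : ℕ) : Fin k → ℝ := fun _ => 1

/-- The all-ones matrix `𝟙𝟙ᵀ`. -/
def onesMat (k : ℕ) : Matrix (Fin k) (Fin k) ℝ := Matrix.of fun _ _ => 1

/-- Scalar saturation: `sat(y; l, u) = l` if `y ≤ l`, `u` if `u ≤ y`, and `y` otherwise. -/
noncomputable def sat1 (y l u : ℝ) : ℝ := if y ≤ l then l else if u ≤ y then u else y

/-- Componentwise (multidimensional) saturation function. -/
noncomputable def satv {k : ℕ} (x xm xp : Fin k → ℝ) : Fin k → ℝ :=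
  fun i => sat1 (x i) (xm i) (xp i)

lemma onesMat_mulVec {k : ℕ} (v : Fin k → ℝ) :
    onesMat k *ᵥ v = (∑ j, v j) • onesVec k := by
  funext i
  simp [onesMat, onesVec, Matrix.mulVec, dotProduct, smul_eq_mul]

/-- the incremental states of the unconstrained closed loop satisfy
the shifted (incremental) dynamics. -/
theorem incremental_dynamics_unconstrained {n m : ℕ}
    (q : Fin n → ℝ) (hq : ∀ i, 0 < q i)
    (B : Matrix (Fin n) (Fin m) ℝ) (hB1 : Bᵀ *ᵥ onesVec n = 0)
    (Lc : Matrix (Fin n) (Fin n) ℝ) (hLc1 : Lc *ᵥ onesVec n = 0)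
    (γc γe γp γl : ℝ) (hγc : 0 < γc) (hγe : 0 < γe) (hγp : 0 < γp) (hγl : 0 < γl)
    (d r xbar0 xbars : Fin n → ℝ)
    (xbar : ℝ → Fin n → ℝ) (hxbar : ∀ t, xbar t = xbar0 + t • xbars)
    (Qinv : Matrix (Fin n) (Fin n) ℝ)
    (hQinv : Qinv = Matrix.diagonal fun i => (q i)⁻¹)
    (x xp : ℝ → Fin n → ℝ) (xe : ℝ → Fin m → ℝ)
    (hx : ∀ t ≥ (0:ℝ), HasDerivAt x
      (-(γc • ((B * Bᵀ) *ᵥ (x t - xbar t))) - γe • (B *ᵥ xe t)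
        + Qinv *ᵥ (γp • xp t - r) + d) t)
    (hxp : ∀ t ≥ (0:ℝ), HasDerivAt xp
      (-(γl • (Lc *ᵥ xp t)) - γp • (Qinv *ᵥ (x t - xbar t))) t)
    (hxe : ∀ t ≥ (0:ℝ), HasDerivAt xe (γe • (Bᵀ *ᵥ (x t - xbar t))) t)
    (dtil : Fin n → ℝ) (hdtil : dtil = d - xbars - Qinv *ᵥ r)
    (xbarp : Fin n → ℝ)
    (hxbarp : xbarp =
      -((γp⁻¹ * (onesVec n ⬝ᵥ (Qinv *ᵥ onesVec n))⁻¹) • (onesMat n *ᵥ dtil)))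
    (xbare : Fin m → ℝ)
    (hxbare : γe • (B *ᵥ xbare) =
      (1 - (onesVec n ⬝ᵥ (Qinv *ᵥ onesVec n))⁻¹ • (Qinv * onesMat n)) *ᵥ dtil) :
    (∀ t ≥ (0:ℝ), HasDerivAt (fun s => x s - xbar s)
        (-(γc • ((B * Bᵀ) *ᵥ (x t - xbar t))) - γe • (B *ᵥ (xe t - xbare))
          + γp • (Qinv *ᵥ (xp t - xbarp))) t) ∧
    (∀ t ≥ (0:ℝ), HasDerivAt (fun s => xp s - xbarp)
        (-(γl • (Lc *ᵥ (xp t - xbarp))) - γp • (Qinv *ᵥ (x t - xbar t))) t) ∧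
    (∀ t ≥ (0:ℝ), HasDerivAt (fun s => xe s - xbare)
        (γe • (Bᵀ *ᵥ (x t - xbar t))) t) := by
  have hxbar' : ∀ t : ℝ, HasDerivAt xbar xbars t := by
    intro t
    have h1 : HasDerivAt (fun s : ℝ => xbar0 + s • xbars) xbars t := by
      have := ((hasDerivAt_id t).smul_const xbars).const_add xbar0
      simpa using this
    have : xbar = fun s : ℝ => xbar0 + s • xbars := funext hxbar
    rw [this]; exact h1
  set s := onesVec n ⬝ᵥ (Qinv *ᵥ onesVec n) with hs
  -- key algebraic identity
  have hkey : γe • (B *ᵥ xbare) - γp • (Qinv *ᵥ xbarp) = dtil := by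
    have h1 : γp • (Qinv *ᵥ xbarp) = -(s⁻¹ • ((Qinv * onesMat n) *ᵥ dtil)) := by
      rw [hxbarp]
      rw [Matrix.mulVec_neg, Matrix.mulVec_smul, smul_neg, smul_smul,
        ← Matrix.mulVec_mulVec]
      rw [← mul_assoc, mul_inv_cancel₀ (ne_of_gt hγp), one_mul]
    rw [h1, hxbare, Matrix.sub_mulVec, Matrix.one_mulVec,
      Matrix.smul_mulVec]
    abel
  -- Lc kills xbarp
  have hLcp : Lc *ᵥ xbarp = 0 := by
    rw [hxbarp, Matrix.mulVec_neg, Matrix.mulVec_smul, onesMat_mulVec,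
      Matrix.mulVec_smul, hLc1]
    simp
  refine ⟨?_, ?_, ?_⟩
  · intro t ht
    have h := (hx t ht).sub (hxbar' t)
    refine h.congr_deriv ?_
    have hkey' : γe • (B *ᵥ xbare) - γp • (Qinv *ᵥ xbarp)
        = d - xbars - Qinv *ᵥ r := by rw [hkey, hdtil]
    simp only [Matrix.mulVec_sub, Matrix.mulVec_smul, smul_sub]
    funext i
    have hi := congrFun hkey' i
    simp only [Pi.sub_apply, Pi.add_apply, Pi.neg_apply, Pi.smul_apply,
      smul_eq_mul] at *
    linarith
  · intro t ht
    have h := (hxp t ht).sub_const xbarp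
    refine h.congr_deriv ?_
    rw [Matrix.mulVec_sub (A := Lc), hLcp, sub_zero]
  · intro t ht
    exact (hxe t ht).sub_const xbare
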